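/- arXiv:1903.00819 — 5 statements merged into one kernel-verified Lean document; each statement's English description precedes it below -/
import Mathlib

section
/- Let t ∈ [−1,1], let m be a positive integer, and let 0 < x_1 < x_2 < ⋯ < x_m < 1. Then the determinant of the m×m real matrix whose (i,j) entry is K_t(x_i,x_j) = min{x_i,x_j} − t·x_i·x_j equals x_1·(1 − t·x_m)·∏_{i=2}^m (x_i − x_{i−1}). -/
open Matrix Finset


/-- For `t ∈ [-1,1]` and `0 < x₀ < x₁ < ⋯ < x_m < 1`, the determinant of the
matrix with entries `K_t(x_i,x_j) = min{x_i,x_j} - t·x_i·x_j` equals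
`x₀·(1 - t·x_m)·∏ (x_{i+1} - x_i)`. -/
theorem det_Kt_matrix (t : ℝ) (ht : t ∈ Set.Icc (-1 : ℝ) 1) (m : ℕ) (x : Fin (m + 1) → ℝ)
    (hmono : StrictMono x) (h0 : 0 < x 0) (h1 : x (Fin.last m) < 1) :
    (Matrix.of fun i j : Fin (m + 1) => min (x i) (x j) - t * (x i * x j)).det =
      x 0 * (1 - t * x (Fin.last m)) * ∏ i : Fin m, (x i.succ - x i.castSucc) := by
  classical
  set d : Fin (m+1) → ℝ := Fin.cases (x 0) (fun i => x i.succ - x i.castSucc) with hd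
  set C : Matrix (Fin (m+1)) (Fin (m+1)) ℝ :=
    Matrix.of fun k j => if k ≤ j then 1 - t * x j else -(t * x j) with hC
  set S : Matrix (Fin (m+1)) (Fin (m+1)) ℝ :=
    Matrix.of fun i k => if k ≤ i then (1:ℝ) else 0 with hS
  set N : Matrix (Fin (m+1)) (Fin (m+1)) ℝ := Matrix.of fun k j => d k * C k j with hN
  set T : Matrix (Fin (m+1)) (Fin (m+1)) ℝ :=
    Matrix.of fun l j => if l = Fin.last m then
        (if j = Fin.last m then 1 - t * x (Fin.last m) else -(t * x j))
      else (if j = l then (1:ℝ) else 0) with hT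
  -- telescoping sum
  have sumd : ∀ p : Fin (m+1), ∑ k ∈ Finset.Iic p, d k = x p := by
    intro p
    induction p using Fin.induction with
    | zero =>
      have h : (Finset.Iic (0 : Fin (m+1))) = {0} := by
        ext k; simp only [Finset.mem_Iic, Finset.mem_singleton]; exact Fin.le_zero_iff
      simp [h, hd]
    | succ p ih =>
      have hins : Finset.Iic p.succ = insert p.succ (Finset.Iic p.castSucc) := by
        ext k
        simp only [Finset.mem_Iic, Finset.mem_insert, Fin.le_def, Fin.ext_iff,
          Fin.val_succ, Fin.coe_castSucc]
        omega
      have hnm : p.succ ∉ Finset.Iic p.castSucc := by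
        simp [Fin.le_def]
      rw [hins, Finset.sum_insert hnm, ih]
      simp [hd]
  -- M = S * N
  have hM : (Matrix.of fun i j : Fin (m + 1) => min (x i) (x j) - t * (x i * x j)) = S * N := by
    ext i j
    simp only [Matrix.mul_apply, hS, hN, hC, Matrix.of_apply, ite_mul, one_mul, zero_mul]
    have hfi : (Finset.univ.filter (fun k : Fin (m+1) => k ≤ i)) = Finset.Iic i := by
      ext k; simp
    rw [Finset.sum_ite, Finset.sum_const_zero, add_zero, hfi]
    have hsplit : ∀ k : Fin (m+1),
        d k * (if k ≤ j then 1 - t * x j else -(t * x j))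
          = (-(t * x j)) * d k + (if k ≤ j then d k else 0) := by
      intro k; split <;> ring
    simp_rw [hsplit]
    rw [Finset.sum_add_distrib, ← Finset.mul_sum, sumd i]
    rw [Finset.sum_ite, Finset.sum_const_zero, add_zero]
    have hfi2 : ((Finset.Iic i).filter (fun k => k ≤ j)) = Finset.Iic (min i j) := by
      ext k; simp [le_min_iff, and_comm]
    rw [hfi2, sumd (min i j)]
    have hmin : x (min i j) = min (x i) (x j) := hmono.monotone.map_min
    rw [hmin]; ring
  -- C = Sᵀ * T
  have hCT : C = Sᵀ * T := by
    ext k j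
    simp only [Matrix.mul_apply, hS, hT, Matrix.transpose_apply, Matrix.of_apply, ite_mul,
      one_mul, zero_mul]
    have hfi : (Finset.univ.filter (fun l : Fin (m+1) => k ≤ l)) = Finset.Ici k := by
      ext l; simp
    rw [Finset.sum_ite, Finset.sum_const_zero, add_zero, hfi]
    have hmem : Fin.last m ∈ Finset.Ici k := by simp [Fin.le_last]
    rw [← Finset.add_sum_erase _ _ hmem]
    have herase : ∀ l ∈ (Finset.Ici k).erase (Fin.last m),
        (if l = Fin.last m then
          (if j = Fin.last m then 1 - t * x (Fin.last m) else -(t * x j))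
          else (if j = l then (1:ℝ) else 0)) = (if j = l then (1:ℝ) else 0) := by
      intro l hl
      rw [if_neg (Finset.ne_of_mem_erase hl)]
    rw [Finset.sum_congr rfl herase, Finset.sum_ite_eq]
    simp only [if_pos rfl, hC, Matrix.of_apply]
    by_cases hj : j = Fin.last m
    · subst hj
      simp [Fin.le_last]
    · rw [if_neg hj]
      have hmemiff : (j ∈ (Finset.Ici k).erase (Fin.last m)) ↔ k ≤ j := by
        simp [hj]
      rw [if_pos trivial]
      by_cases hk : k ≤ j
      · rw [if_pos hk, if_pos (hmemiff.mpr hk)]; ring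
      · rw [if_neg hk, if_neg (fun hm => hk (hmemiff.mp hm))]; ring
  have hdetS : S.det = 1 := by
    have htri : S.BlockTriangular OrderDual.toDual := by
      intro i k h
      have hik : i < k := h
      simp only [hS, Matrix.of_apply]
      rw [if_neg (not_le.mpr hik)]
    rw [Matrix.det_of_lowerTriangular S htri]
    simp [hS]
  have hdetT : T.det = 1 - t * x (Fin.last m) := by
    have htri : T.BlockTriangular OrderDual.toDual := by
      intro l j h
      have hlj : l < j := h
      simp only [hT, Matrix.of_apply]
      rw [if_neg (by rintro rfl; exact absurd hlj (not_lt.mpr (Fin.le_last j))),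
        if_neg hlj.ne']
    rw [Matrix.det_of_lowerTriangular T htri]
    have hdiag : ∀ l : Fin (m+1), T l l = if l = Fin.last m then 1 - t * x (Fin.last m) else 1 := by
      intro l
      simp only [hT, Matrix.of_apply]
      by_cases hl : l = Fin.last m
      · subst hl; simp
      · simp [hl]
    simp_rw [hdiag]
    rw [Finset.prod_ite_eq' Finset.univ (Fin.last m)
      (fun _ => 1 - t * x (Fin.last m))]
    simp
  have hprodd : ∏ k : Fin (m+1), d k = x 0 * ∏ i : Fin m, (x i.succ - x i.castSucc) := by
    rw [Fin.prod_univ_succ]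
    simp [hd]
  rw [hM, Matrix.det_mul, hdetS, one_mul, hN, hCT]
  rw [show (Matrix.of fun k j => d k * (Sᵀ * T) k j) =
    Matrix.of fun k j => d k * ((Sᵀ * T) : Matrix (Fin (m+1)) (Fin (m+1)) ℝ) k j from rfl]
  rw [Matrix.det_mul_column d, Matrix.det_mul, Matrix.det_transpose, hdetS, one_mul, hdetT,
    hprodd]
  ring
end

section
/- For every t ∈ [−1,1] and every finite family of pairwise distinct points x_1,…,x_m ∈ (0,1), the real symmetric m×m matrix [K_t(x_i,x_j)]_{i,j=1}^m is positive definite (that is, for every nonzero c ∈ ℝ^m one has ∑_{i,j} c_i c_j K_t(x_i,x_j) > 0); in particular this matrix is invertible. -/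
open Finset

namespace KtAux

/-- `uu m y k` = the `k`-th "grid point": `0, y 0, y 1, …, y (m-1), 1`. -/
def uu (m : ℕ) (y : Fin m → ℝ) : ℕ → ℝ
  | 0 => 0
  | k + 1 => if h : k < m then y ⟨k, h⟩ else 1

lemma chi_sum {m : ℕ} (y : Fin m → ℝ) (i : Fin m) :
    ∑ k ∈ range (m + 1), (uu m y (k + 1) - uu m y k) * (if k ≤ (i : ℕ) then (1 : ℝ) else 0)
      = y i := by
  rw [← Finset.sum_subset (Finset.range_subset_range.mpr (by omega : (i : ℕ) + 1 ≤ m + 1))]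
  · have h : ∀ k ∈ range ((i : ℕ) + 1),
        (uu m y (k + 1) - uu m y k) * (if k ≤ (i : ℕ) then (1 : ℝ) else 0)
          = uu m y (k + 1) - uu m y k := by
      intro k hk
      rw [mem_range] at hk
      rw [if_pos (by omega), mul_one]
    rw [Finset.sum_congr rfl h, Finset.sum_range_sub (uu m y)]
    simp [uu, i.isLt]
  · intro k _ hk
    rw [mem_range, not_lt] at hk
    rw [if_neg (by omega), mul_zero]

lemma d_sum {m : ℕ} (y : Fin m → ℝ) :
    ∑ k ∈ range (m + 1), (uu m y (k + 1) - uu m y k) = 1 := by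
  rw [Finset.sum_range_sub (uu m y)]
  simp [uu]

lemma chi_min {m : ℕ} (y : Fin m → ℝ) (hy : StrictMono y) (i j : Fin m) :
    ∑ k ∈ range (m + 1), (uu m y (k + 1) - uu m y k) *
        ((if k ≤ (i : ℕ) then (1 : ℝ) else 0) * (if k ≤ (j : ℕ) then (1 : ℝ) else 0))
      = min (y i) (y j) := by
  rcases le_total (i : ℕ) (j : ℕ) with h | h
  · have hij : i ≤ j := by exact_mod_cast h
    rw [min_eq_left (hy.le_iff_le.mpr hij), ← chi_sum y i]
    refine Finset.sum_congr rfl fun k _ => ?_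
    by_cases hki : k ≤ (i : ℕ)
    · rw [if_pos hki, if_pos (le_trans hki h)]; ring
    · rw [if_neg hki]; ring
  · have hij : j ≤ i := by exact_mod_cast h
    rw [min_eq_right (hy.le_iff_le.mpr hij), ← chi_sum y j]
    refine Finset.sum_congr rfl fun k _ => ?_
    by_cases hkj : k ≤ (j : ℕ)
    · rw [if_pos hkj, if_pos (le_trans hkj h)]; ring
    · rw [if_neg hkj]; ring

lemma sorted_pos {m : ℕ} (y : Fin m → ℝ) (hy : StrictMono y)
    (hy0 : ∀ i, y i ∈ Set.Ioo (0 : ℝ) 1) (c : Fin m → ℝ) (hc : c ≠ 0) :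
    0 < ∑ i, ∑ j, c i * c j * (min (y i) (y j) - y i * y j) := by
  set d : ℕ → ℝ := fun k => uu m y (k + 1) - uu m y k with hd
  set e : ℕ → Fin m → ℝ := fun k i => (if k ≤ (i : ℕ) then (1 : ℝ) else 0) - y i with he
  set w : ℕ → ℝ := fun k => ∑ i, c i * e k i with hw
  have hker : ∀ i j : Fin m, min (y i) (y j) - y i * y j
      = ∑ k ∈ range (m + 1), d k * (e k i * e k j) := by
    intro i j
    have expand : ∀ k, d k * (e k i * e k j)
        = d k * ((if k ≤ (i : ℕ) then (1 : ℝ) else 0) * (if k ≤ (j : ℕ) then (1 : ℝ) else 0))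
          - (d k * (if k ≤ (i : ℕ) then (1 : ℝ) else 0)) * y j
          - (d k * (if k ≤ (j : ℕ) then (1 : ℝ) else 0)) * y i
          + d k * (y i * y j) := by
      intro k; simp only [he]; ring
    rw [Finset.sum_congr rfl fun k _ => expand k, Finset.sum_add_distrib,
      Finset.sum_sub_distrib, Finset.sum_sub_distrib, ← Finset.sum_mul, ← Finset.sum_mul,
      ← Finset.sum_mul, chi_min y hy i j, chi_sum y i, chi_sum y j, d_sum y]
    ring
  have hquad : ∑ i, ∑ j, c i * c j * (min (y i) (y j) - y i * y j)
      = ∑ k ∈ range (m + 1), d k * (w k * w k) := by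
    simp_rw [hker, Finset.mul_sum]
    calc ∑ i, ∑ j, ∑ k ∈ range (m + 1), c i * c j * (d k * (e k i * e k j))
        = ∑ i, ∑ k ∈ range (m + 1), ∑ j, c i * c j * (d k * (e k i * e k j)) :=
          Finset.sum_congr rfl fun i _ => Finset.sum_comm
      _ = ∑ k ∈ range (m + 1), ∑ i, ∑ j, c i * c j * (d k * (e k i * e k j)) :=
          Finset.sum_comm
      _ = ∑ k ∈ range (m + 1), d k * (w k * w k) := by
          refine Finset.sum_congr rfl fun k _ => ?_
          simp only [hw]
          rw [Finset.sum_mul_sum, Finset.mul_sum]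
          refine Finset.sum_congr rfl fun i _ => ?_
          rw [Finset.mul_sum]
          exact Finset.sum_congr rfl fun j _ => by ring
  have hdpos : ∀ k, k < m + 1 → 0 < d k := by
    intro k hk
    cases k with
    | zero =>
        by_cases h : 0 < m
        · simpa [hd, uu, h] using (hy0 ⟨0, h⟩).1
        · simp [hd, uu, h]
    | succ k =>
        have hkm : k < m := by omega
        by_cases h : k + 1 < m
        · have : (⟨k, hkm⟩ : Fin m) < ⟨k + 1, h⟩ := by simp [Fin.mk_lt_mk]
          simpa [hd, uu, h, hkm, sub_pos] using hy this
        · simpa [hd, uu, h, hkm, sub_pos] using (hy0 ⟨k, hkm⟩).2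
  have hwc : ∀ i₀ : Fin m, c i₀ = w (i₀ : ℕ) - w ((i₀ : ℕ) + 1) := by
    intro i₀
    simp only [hw, he, ← Finset.sum_sub_distrib]
    rw [Finset.sum_eq_single i₀]
    · simp; ring
    · intro i _ hne
      have hval : (i : ℕ) ≠ (i₀ : ℕ) := fun h => hne (Fin.ext h)
      by_cases hle : (i₀ : ℕ) + 1 ≤ (i : ℕ)
      · rw [if_pos (by omega), if_pos hle]; ring
      · rw [if_neg (by omega), if_neg hle]; ring
    · intro h; exact absurd (Finset.mem_univ i₀) h
  have hex : ∃ k ∈ range (m + 1), w k ≠ 0 := by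
    by_contra hall
    push_neg at hall
    apply hc
    funext i₀
    have h1 := hall (i₀ : ℕ) (by rw [mem_range]; omega)
    have h2 := hall ((i₀ : ℕ) + 1) (by rw [mem_range]; omega)
    simp [hwc i₀, h1, h2]
  rw [hquad]
  obtain ⟨k0, hk0mem, hk0⟩ := hex
  refine Finset.sum_pos' (fun k hk => ?_) ⟨k0, hk0mem, ?_⟩
  · exact mul_nonneg (le_of_lt (hdpos k (mem_range.mp hk))) (mul_self_nonneg _)
  · exact mul_pos (hdpos k0 (mem_range.mp hk0mem)) (mul_self_pos.mpr hk0)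

end KtAux

/-- For `t ∈ [-1,1]` and pairwise distinct `x₁,…,x_m ∈ (0,1)`, the matrix
`[K_t(x_i,x_j)]` with `K_t(x,y) = min{x,y} - t·x·y` is positive definite (the quadratic form
is positive on nonzero vectors), and in particular invertible. -/
theorem Kt_matrix_posDef (t : ℝ) (ht : t ∈ Set.Icc (-1 : ℝ) 1) (m : ℕ) (x : Fin m → ℝ)
    (hx : ∀ i, x i ∈ Set.Ioo (0 : ℝ) 1) (hinj : Function.Injective x) :
    (∀ c : Fin m → ℝ, c ≠ 0 →
        0 < ∑ i, ∑ j, c i * c j * (min (x i) (x j) - t * (x i * x j))) ∧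
      IsUnit (Matrix.of fun i j : Fin m => min (x i) (x j) - t * (x i * x j)) := by
  have key : ∀ c : Fin m → ℝ, c ≠ 0 →
      0 < ∑ i, ∑ j, c i * c j * (min (x i) (x j) - t * (x i * x j)) := by
    intro c hc
    set σ := Tuple.sort x with hσ
    have hmono : StrictMono (x ∘ σ) :=
      (Tuple.monotone_sort x).strictMono_of_injective (hinj.comp σ.injective)
    set y : Fin m → ℝ := x ∘ σ with hy
    set b : Fin m → ℝ := c ∘ σ with hb
    have hy0 : ∀ i, y i ∈ Set.Ioo (0 : ℝ) 1 := fun i => hx _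
    have hbne : b ≠ 0 := by
      intro h
      apply hc
      funext i
      have := congrFun h (σ.symm i)
      simpa [hb] using this
    have hre : ∑ i, ∑ j, c i * c j * (min (x i) (x j) - t * (x i * x j))
        = ∑ i, ∑ j, b i * b j * (min (y i) (y j) - t * (y i * y j)) := by
      rw [← Equiv.sum_comp σ (fun i => ∑ j, c i * c j * (min (x i) (x j) - t * (x i * x j)))]
      refine Finset.sum_congr rfl fun i _ => ?_
      rw [← Equiv.sum_comp σ
        (fun j => c (σ i) * c j * (min (x (σ i)) (x j) - t * (x (σ i) * x j)))]
      rfl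
    have hsplit : ∑ i, ∑ j, b i * b j * (min (y i) (y j) - t * (y i * y j))
        = (∑ i, ∑ j, b i * b j * (min (y i) (y j) - y i * y j))
          + (1 - t) * ((∑ i, b i * y i) * (∑ i, b i * y i)) := by
      rw [Finset.sum_mul_sum, Finset.mul_sum, ← Finset.sum_add_distrib]
      refine Finset.sum_congr rfl fun i _ => ?_
      rw [Finset.mul_sum, ← Finset.sum_add_distrib]
      refine Finset.sum_congr rfl fun j _ => by ring
    have hpos := KtAux.sorted_pos y hmono hy0 b hbne
    have hsq : 0 ≤ (1 - t) * ((∑ i, b i * y i) * (∑ i, b i * y i)) :=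
      mul_nonneg (by linarith [ht.2]) (mul_self_nonneg _)
    rw [hre, hsplit]
    linarith
  refine ⟨key, ?_⟩
  have hPD : Matrix.PosDef (Matrix.of fun i j : Fin m => min (x i) (x j) - t * (x i * x j)) := by
    rw [Matrix.posDef_iff_dotProduct_mulVec]
    constructor
    · ext i j
      simp only [Matrix.conjTranspose_apply, Matrix.of_apply, star_trivial]
      rw [min_comm, mul_comm (x j) (x i)]
    · intro v hv
      have hrw : dotProduct (star v)
            (Matrix.mulVec (Matrix.of fun i j : Fin m => min (x i) (x j) - t * (x i * x j)) v)
          = ∑ i, ∑ j, v i * v j * (min (x i) (x j) - t * (x i * x j)) := by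
        simp only [dotProduct, Matrix.mulVec, Matrix.of_apply, star_trivial,
          Finset.mul_sum]
        exact Finset.sum_congr rfl fun i _ => Finset.sum_congr rfl fun j _ => by ring
      rw [hrw]
      exact key v hv
  exact hPD.isUnit
end

section
/- Let t ∈ [−1,1], let (x_i)_{i∈ℕ} be a sequence of pairwise distinct points in (0,1), and let (c_i)_{i∈ℕ} be complex numbers with ∑_{i∈ℕ} |c_i| < ∞. If ∑_{i∈ℕ} K_t(x_i,x)·c_i = 0 for every x ∈ (0,1), then c_i = 0 for every i ∈ ℕ. -/
lemma phi_abs_le (a p h : ℝ) (hh : 0 < h) :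
    |min a (p + h) + min a (p - h) - 2 * min a p| ≤ h := by
  rcases le_total a (p - h) with h1 | h1
  · rw [min_eq_left h1, min_eq_left (by linarith : a ≤ p + h),
      min_eq_left (by linarith : a ≤ p)]
    rw [abs_le]; constructor <;> linarith
  · rcases le_total a p with h2 | h2
    · rw [min_eq_left (by linarith : a ≤ p + h), min_eq_right h1,
        min_eq_left h2]
      rw [abs_le]; constructor <;> linarith
    · rcases le_total a (p + h) with h3 | h3
      · rw [min_eq_left h3, min_eq_right (by linarith : p - h ≤ a),
          min_eq_right h2]
        rw [abs_le]; constructor <;> linarith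
      · rw [min_eq_right h3, min_eq_right (by linarith : p - h ≤ a),
          min_eq_right h2]
        rw [abs_le]; constructor <;> linarith

lemma phi_eq_zero (a p h : ℝ) (hh : 0 < h) (hfar : h ≤ |a - p|) :
    min a (p + h) + min a (p - h) - 2 * min a p = 0 := by
  rcases le_abs.mp hfar with h1 | h1
  · -- h ≤ a - p, i.e. a ≥ p + h
    rw [min_eq_right (by linarith : p + h ≤ a),
      min_eq_right (by linarith : p - h ≤ a),
      min_eq_right (by linarith : p ≤ a)]
    ring
  · -- h ≤ -(a - p), i.e. a ≤ p - h
    rw [min_eq_left (by linarith : a ≤ p + h),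
      min_eq_left (by linarith : a ≤ p - h),
      min_eq_left (by linarith : a ≤ p)]
    ring

/-- assumption (A3′) for the kernel `K_t(x,y) = min{x,y} - t·x·y` on `(0,1)`:
if `(x_i)` are pairwise distinct points of `(0,1)`, `(c_i)` are complex numbers with
`∑ |c_i| < ∞`, and `∑_i K_t(x_i,y)·c_i = 0` for all `y ∈ (0,1)`, then all `c_i = 0`. -/
theorem Kt_A3 (t : ℝ) (ht : t ∈ Set.Icc (-1 : ℝ) 1) (x : ℕ → ℝ)
    (hx : ∀ i, x i ∈ Set.Ioo (0 : ℝ) 1) (hinj : Function.Injective x)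
    (c : ℕ → ℂ) (hc : Summable fun i => ‖c i‖)
    (hzero : ∀ y ∈ Set.Ioo (0 : ℝ) 1,
      ∑' i : ℕ, ((min (x i) y - t * (x i * y) : ℝ) : ℂ) * c i = 0) :
    ∀ i, c i = 0 := by
  classical
  -- summability of the kernel series for any y ∈ (0,1)
  have hsum : ∀ y ∈ Set.Ioo (0 : ℝ) 1,
      Summable (fun i => ((min (x i) y - t * (x i * y) : ℝ) : ℂ) * c i) := by
    intro y hy
    refine Summable.of_norm_bounded (hc.mul_left 2) ?_
    intro i
    rw [norm_mul, Complex.norm_real]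
    have hxi := hx i
    have h1 : |min (x i) y - t * (x i * y)| ≤ 2 := by
      have hmin : |min (x i) y| ≤ 1 := by
        rw [abs_le]
        constructor
        · have := le_min hxi.1.le hy.1.le; linarith
        · exact le_trans (min_le_left _ _) (by linarith [hxi.2])
      have hprod : |t * (x i * y)| ≤ 1 := by
        rw [abs_mul, abs_mul]
        have h1 : |t| ≤ 1 := abs_le.mpr ⟨ht.1, ht.2⟩
        have h2 : |x i| ≤ 1 := abs_le.mpr ⟨by linarith [hxi.1], hxi.2.le⟩
        have h3 : |y| ≤ 1 := abs_le.mpr ⟨by linarith [hy.1], hy.2.le⟩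
        calc |t| * (|x i| * |y|) ≤ 1 * (1 * 1) := by
              apply mul_le_mul h1 _ (by positivity) zero_le_one
              apply mul_le_mul h2 h3 (abs_nonneg _) zero_le_one
          _ = 1 := by ring
      calc |min (x i) y - t * (x i * y)| ≤ |min (x i) y| + |t * (x i * y)| :=
            abs_sub _ _
        _ ≤ 2 := by linarith
    exact mul_le_mul_of_nonneg_right h1 (norm_nonneg _)
  intro j
  -- it suffices to show ‖c j‖ ≤ ε for all ε > 0
  suffices hS : ∀ ε > 0, ‖c j‖ ≤ ε by
    have h0 : ‖c j‖ ≤ 0 := by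
      by_contra hcon
      push_neg at hcon
      have := hS (‖c j‖ / 2) (by linarith)
      linarith
    simpa using le_antisymm h0 (norm_nonneg _)
  intro ε hε
  -- choose a finset s whose complement has small tail
  obtain ⟨s, hs⟩ : ∃ s : Finset ℕ, ∑' i : {i // i ∉ s}, ‖c i‖ < ε := by
    have := tendsto_tsum_compl_atTop_zero (fun i => ‖c i‖)
    exact (this.eventually_lt_const hε).exists
  -- choose h small
  set S : Finset ℝ :=
    insert (x j) (insert (1 - x j) ((s.erase j).image fun i => |x i - x j|)) with hSdef
  have hSne : S.Nonempty := ⟨x j, by simp [hSdef]⟩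
  set δ : ℝ := S.inf' hSne id with hδdef
  have hδpos : 0 < δ := by
    rw [hδdef, Finset.lt_inf'_iff]
    intro b hb
    simp only [id_eq]
    simp only [hSdef, Finset.mem_insert, Finset.mem_image, Finset.mem_erase] at hb
    rcases hb with rfl | rfl | ⟨i, ⟨hij, _⟩, rfl⟩
    · exact (hx j).1
    · linarith [(hx j).2]
    · have : x i ≠ x j := fun h => hij (hinj h)
      simpa [sub_eq_zero] using abs_pos.mpr (sub_ne_zero.mpr this)
  set h : ℝ := δ / 2 with hhdef
  have hhpos : 0 < h := by positivity
  have hδle : ∀ b ∈ S, δ ≤ b := fun b hb => Finset.inf'_le id hb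
  have hhxj : h < x j := by
    have := hδle (x j) (by simp [hSdef]); rw [hhdef]; linarith
  have hhxj' : h < 1 - x j := by
    have := hδle (1 - x j) (by simp [hSdef]); rw [hhdef]; linarith
  have hhfar : ∀ i ∈ s, i ≠ j → h ≤ |x i - x j| := by
    intro i hi hij
    have hmem : |x i - x j| ∈ S := by
      simp only [hSdef, Finset.mem_insert, Finset.mem_image, Finset.mem_erase]
      exact Or.inr (Or.inr ⟨i, ⟨hij, hi⟩, rfl⟩)
    have := hδle _ hmem; rw [hhdef]; linarith
  -- the three evaluation points
  have hy1 : x j + h ∈ Set.Ioo (0 : ℝ) 1 := ⟨by linarith [(hx j).1], by linarith⟩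
  have hy2 : x j - h ∈ Set.Ioo (0 : ℝ) 1 := ⟨by linarith, by linarith [(hx j).2]⟩
  have hy3 : x j ∈ Set.Ioo (0 : ℝ) 1 := hx j
  -- the combined series
  set φ : ℕ → ℝ := fun i =>
    min (x i) (x j + h) + min (x i) (x j - h) - 2 * min (x i) (x j) with hφdef
  have hφabs : ∀ i, |φ i| ≤ h := fun i => phi_abs_le (x i) (x j) h hhpos
  have hΦsum : Summable (fun i => ((φ i : ℝ) : ℂ) * c i) := by
    refine Summable.of_norm_bounded (hc.mul_left h) ?_
    intro i
    rw [norm_mul, Complex.norm_real]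
    exact mul_le_mul_of_nonneg_right (hφabs i) (norm_nonneg _)
  have hkey : ∑' i, ((φ i : ℝ) : ℂ) * c i = 0 := by
    have e1 := hzero _ hy1
    have e2 := hzero _ hy2
    have e3 := hzero _ hy3
    have hcomb : ∀ i, ((φ i : ℝ) : ℂ) * c i =
        ((min (x i) (x j + h) - t * (x i * (x j + h)) : ℝ) : ℂ) * c i +
        ((min (x i) (x j - h) - t * (x i * (x j - h)) : ℝ) : ℂ) * c i -
        2 * (((min (x i) (x j) - t * (x i * (x j)) : ℝ) : ℂ) * c i) := by
      intro i
      rw [hφdef]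
      push_cast
      ring
    calc ∑' i, ((φ i : ℝ) : ℂ) * c i
        = ∑' i, (((min (x i) (x j + h) - t * (x i * (x j + h)) : ℝ) : ℂ) * c i +
            ((min (x i) (x j - h) - t * (x i * (x j - h)) : ℝ) : ℂ) * c i -
            2 * (((min (x i) (x j) - t * (x i * (x j)) : ℝ) : ℂ) * c i)) :=
          tsum_congr hcomb
      _ = (∑' i, ((min (x i) (x j + h) - t * (x i * (x j + h)) : ℝ) : ℂ) * c i) +
          (∑' i, ((min (x i) (x j - h) - t * (x i * (x j - h)) : ℝ) : ℂ) * c i) -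
          2 * ∑' i, ((min (x i) (x j) - t * (x i * (x j)) : ℝ) : ℂ) * c i := by
          rw [Summable.tsum_sub (((hsum _ hy1).add (hsum _ hy2))) ((hsum _ hy3).mul_left 2),
            Summable.tsum_add (hsum _ hy1) (hsum _ hy2), tsum_mul_left]
      _ = 0 := by rw [e1, e2, e3]; ring
  -- split off the j-th term
  have hsplit := Summable.tsum_eq_add_tsum_ite hΦsum j
  have hφj : φ j = -h := by
    rw [hφdef]
    simp only
    rw [min_eq_left (by linarith : x j ≤ x j + h),
      min_eq_right (by linarith : x j - h ≤ x j), min_self]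
    ring
  have hmain : ((h : ℝ) : ℂ) * c j = ∑' i, ite (i = j) 0 (((φ i : ℝ) : ℂ) * c i) := by
    rw [hkey] at hsplit
    rw [hφj] at hsplit
    push_cast at hsplit ⊢
    linear_combination hsplit
  -- bound the remaining sum
  have hind : ∀ i, ‖ite (i = j) 0 (((φ i : ℝ) : ℂ) * c i)‖ ≤
      h * Set.indicator (↑s : Set ℕ)ᶜ (fun i => ‖c i‖) i := by
    intro i
    have hnn : (0 : ℝ) ≤ Set.indicator (↑s : Set ℕ)ᶜ (fun i => ‖c i‖) i :=
      Set.indicator_nonneg (fun _ _ => norm_nonneg _) _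
    by_cases hij : i = j
    · rw [if_pos hij, norm_zero]
      exact mul_nonneg hhpos.le hnn
    · rw [if_neg hij, norm_mul, Complex.norm_real]
      by_cases his : i ∈ s
      · have hz : φ i = 0 := phi_eq_zero (x i) (x j) h hhpos (hhfar i his hij)
        rw [hz, norm_zero, zero_mul]
        exact mul_nonneg hhpos.le hnn
      · rw [Set.indicator_of_mem (by simpa using his)]
        exact mul_le_mul_of_nonneg_right (hφabs i) (norm_nonneg _)
  have hindsum : Summable (fun i => h * Set.indicator (↑s : Set ℕ)ᶜ (fun i => ‖c i‖) i) :=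
    (hc.indicator _).mul_left h
  have hΦnorm : Summable (fun i => ‖ite (i = j) 0 (((φ i : ℝ) : ℂ) * c i)‖) :=
    Summable.of_nonneg_of_le (fun _ => norm_nonneg _) hind hindsum
  have htsum_ind : ∑' i, Set.indicator (↑s : Set ℕ)ᶜ (fun i => ‖c i‖) i < ε := by
    rw [← tsum_subtype]
    have heq : (∑' (i : {i // i ∉ s}), ‖c (i : ℕ)‖) =
        ∑' (i : ((↑s : Set ℕ)ᶜ : Set ℕ)), ‖c (i : ℕ)‖ :=
      (Equiv.subtypeEquivRight (fun i => by simp)).tsum_eq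
        (fun i : ((↑s : Set ℕ)ᶜ : Set ℕ) => ‖c (i : ℕ)‖)
    rw [← heq]
    exact hs
  have hfinal : h * ‖c j‖ ≤ h * ε := by
    have h1 : ‖((h : ℝ) : ℂ) * c j‖ ≤ ∑' i, ‖ite (i = j) 0 (((φ i : ℝ) : ℂ) * c i)‖ := by
      rw [hmain]
      exact norm_tsum_le_tsum_norm hΦnorm
    have h2 : ∑' i, ‖ite (i = j) 0 (((φ i : ℝ) : ℂ) * c i)‖ ≤
        ∑' i, h * Set.indicator (↑s : Set ℕ)ᶜ (fun i => ‖c i‖) i := by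
      exact Summable.tsum_le_tsum hind hΦnorm hindsum
    have h3 : ∑' i, h * Set.indicator (↑s : Set ℕ)ᶜ (fun i => ‖c i‖) i ≤ h * ε := by
      rw [tsum_mul_left]
      exact mul_le_mul_of_nonneg_left htsum_ind.le hhpos.le
    calc h * ‖c j‖ = ‖((h : ℝ) : ℂ) * c j‖ := by
          rw [norm_mul, Complex.norm_real, Real.norm_eq_abs, abs_of_pos hhpos]
      _ ≤ h * ε := le_trans h1 (le_trans h2 h3)
  exact le_of_mul_le_mul_left hfinal hhpos
end

section
/- Let x_1,…,x_m ∈ (0,1) be pairwise distinct. Then the m×m real matrix [K_w(x_i,x_j)]_{i,j=1}^m is invertible, and for every x ∈ (0,1) the unique solution b ∈ ℝ^m of the linear system ∑_{j=1}^m K_w(x_i,x_j)·b_j = K_w(x,x_i) for all i ∈ {1,…,m} satisfies ∑_{i=1}^m |b_i| ≤ 1. -/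
open Finset

lemma Kw_ker_trivial {m : ℕ} (t : Fin m → ℝ) (h0 : ∀ i, 0 < t i) (h1 : ∀ i, t i < 1)
    (hm : StrictMono t) (c : Fin m → ℝ)
    (hc : ∀ i, ∑ j, (1 - |t i - t j|) * c j = 0) : c = 0 := by
  rcases Nat.eq_zero_or_pos m with hm0 | hm0
  · subst hm0; funext i; exact absurd i.2 (by omega)
  set F : Fin m := ⟨0, hm0⟩ with hF
  set L : Fin m := ⟨m - 1, by omega⟩ with hL
  have habs1 : ∀ i j : Fin m, i ≤ j → |t i - t j| = t j - t i := by
    intro i j hij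
    rw [abs_sub_comm]; exact abs_of_nonneg (sub_nonneg.2 (hm.monotone hij))
  have habs2 : ∀ i j : Fin m, j ≤ i → |t i - t j| = t i - t j := fun i j hij =>
    abs_of_nonneg (sub_nonneg.2 (hm.monotone hij))
  have hFle : ∀ j : Fin m, F ≤ j := fun j => by
    simp [hF, Fin.le_def]
  have hLge : ∀ j : Fin m, j ≤ L := fun j => by
    simp only [hL, Fin.le_def]; omega
  have E0 : ∑ j, (1 - (t j - t F)) * c j = 0 := by
    rw [← hc F]; exact Finset.sum_congr rfl fun j _ => by rw [habs1 F j (hFle j)]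
  have EL : ∑ j, (1 - (t L - t j)) * c j = 0 := by
    rw [← hc L]; exact Finset.sum_congr rfl fun j _ => by rw [habs2 L j (hLge j)]
  have hS : (2 + t F - t L) * (∑ j, c j) = 0 := by
    calc (2 + t F - t L) * (∑ j, c j)
        = ∑ j, ((1 - (t j - t F)) * c j + (1 - (t L - t j)) * c j) := by
          rw [Finset.mul_sum]; exact Finset.sum_congr rfl fun j _ => by ring
      _ = 0 := by rw [Finset.sum_add_distrib, E0, EL]; ring
  have hSz : ∑ j, c j = 0 := by
    have hpos : 0 < 2 + t F - t L := by have := h0 F; have := h1 L; linarith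
    rcases mul_eq_zero.1 hS with h | h
    · exact absurd h (ne_of_gt hpos)
    · exact h
  have hVall : ∀ k : Fin m, ∑ j ∈ Finset.univ.filter (· ≤ k), c j = 0 := by
    intro k
    by_cases hk : (k : ℕ) + 1 < m
    · set k1 : Fin m := ⟨(k : ℕ) + 1, hk⟩ with hk1
      have hd : 0 < t k1 - t k := sub_pos.2 (hm (by simp [hk1, Fin.lt_def]))
      have hdiff : ∑ j, (if j ≤ k then -(t k1 - t k) * c j else (t k1 - t k) * c j) = 0 := by
        have hsub : ∑ j, ((1 - |t k1 - t j|) - (1 - |t k - t j|)) * c j = 0 := by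
          have h1' := hc k1; have h0' := hc k
          calc ∑ j, ((1 - |t k1 - t j|) - (1 - |t k - t j|)) * c j
              = ∑ j, ((1 - |t k1 - t j|) * c j - (1 - |t k - t j|) * c j) :=
                Finset.sum_congr rfl fun j _ => by ring
            _ = 0 := by rw [Finset.sum_sub_distrib, h1', h0']; ring
        rw [← hsub]
        refine Finset.sum_congr rfl fun j _ => ?_
        by_cases hj : j ≤ k
        · have hjk1 : j ≤ k1 := le_trans hj (by simp [hk1, Fin.le_def])
          rw [if_pos hj, habs2 k1 j hjk1, habs2 k j hj]; ring
        · have hkj : k1 ≤ j := by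
            rw [Fin.not_le] at hj
            simp only [hk1, Fin.le_def]
            exact hj
          have hkj' : k ≤ j := le_of_lt (Fin.not_le.1 hj)
          rw [if_neg hj, habs1 k1 j hkj, habs1 k j hkj']; ring
      rw [Finset.sum_ite, ← Finset.mul_sum, ← Finset.mul_sum] at hdiff
      have hcompl := Finset.sum_filter_add_sum_filter_not Finset.univ (· ≤ k) c
      rw [hSz] at hcompl
      set V := ∑ j ∈ Finset.univ.filter (· ≤ k), c j with hV
      have hVc : ∑ j ∈ Finset.univ.filter (fun j => ¬ j ≤ k), c j = -V := by linarith
      rw [hVc] at hdiff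
      have : (t k1 - t k) * (2 * V) = 0 := by linarith
      rcases mul_eq_zero.1 this with h | h
      · exact absurd h (ne_of_gt hd)
      · linarith
    · have : Finset.univ.filter (· ≤ k) = Finset.univ := by
        refine Finset.filter_true_of_mem fun j _ => ?_
        rw [Fin.le_def]; omega
      rw [this]; exact hSz
  have hzero : ∀ n : ℕ, ∀ i : Fin m, (i : ℕ) = n → c i = 0 := by
    intro n
    induction n using Nat.strong_induction_on with
    | _ n ih =>
      intro i hi
      have hsplit : Finset.univ.filter (· ≤ i) = insert i (Finset.univ.filter (· < i)) := by
        ext j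
        simp only [Finset.mem_filter, Finset.mem_univ, true_and, Finset.mem_insert]
        constructor
        · intro h; rcases lt_or_eq_of_le h with h | h
          · exact Or.inr h
          · exact Or.inl h
        · rintro (h | h)
          · exact le_of_eq h
          · exact le_of_lt h
      have hnotmem : i ∉ Finset.univ.filter (· < i) := by simp
      have h2 : ∑ j ∈ Finset.univ.filter (· < i), c j = 0 := by
        refine Finset.sum_eq_zero fun j hj => ?_
        have hj' : j < i := (Finset.mem_filter.1 hj).2
        exact ih (j : ℕ) (by rw [← hi]; exact hj') j rfl
      have := hVall i
      rw [hsplit, Finset.sum_insert hnotmem, h2] at this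
      linarith
  funext i; exact hzero (i : ℕ) i rfl

open Finset

lemma Kw_exists_sol {m : ℕ} (hm0 : 0 < m) (t : Fin m → ℝ) (h0 : ∀ i, 0 < t i)
    (h1 : ∀ i, t i < 1) (hm : StrictMono t) (y : ℝ) (hy0 : 0 < y) (hy1 : y < 1) :
    ∃ b : Fin m → ℝ, (∀ i, ∑ j, (1 - |t i - t j|) * b j = 1 - |y - t i|) ∧
      ∑ i, |b i| ≤ 1 := by
  set F : Fin m := ⟨0, hm0⟩ with hF
  set L : Fin m := ⟨m - 1, by omega⟩ with hL
  have hFle : ∀ j : Fin m, F ≤ j := fun j => by simp [hF, Fin.le_def]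
  have hLge : ∀ j : Fin m, j ≤ L := fun j => by simp only [hL, Fin.le_def]; omega
  have htF : ∀ j : Fin m, t F ≤ t j := fun j => hm.monotone (hFle j)
  have htL : ∀ j : Fin m, t j ≤ t L := fun j => hm.monotone (hLge j)
  have hsum : ∀ (f : Fin m → ℝ) (a : Fin m), (∑ j, f j * (if j = a then (1:ℝ) else 0)) = f a := by
    intro f a
    rw [Finset.sum_eq_single a]
    · simp
    · intro j _ hj; simp [hj]
    · intro h; exact absurd (Finset.mem_univ a) h
  set d : ℝ := t L - t F with hd
  have hd0 : 0 ≤ d := sub_nonneg.2 (htF L)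
  have hd1 : d < 1 := by have := h0 F; have := h1 L; simp only [hd]; linarith
  have h2d : (0:ℝ) < 2 - d := by linarith
  by_cases hyF : y ≤ t F
  · -- y left of all nodes
    set c : ℝ := (t F - y) / (2 - d) with hc
    have hc0 : 0 ≤ c := div_nonneg (by linarith) h2d.le
    have hc1 : c < 1 := (div_lt_one h2d).2 (by have := h1 F; linarith)
    have hcd : c * (2 - d) = t F - y := div_mul_cancel₀ _ (ne_of_gt h2d)
    refine ⟨fun j => (if j = F then (1:ℝ) else 0)
        - c * ((if j = F then (1:ℝ) else 0) + (if j = L then (1:ℝ) else 0)), ?_, ?_⟩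
    · intro i
      have e1 : ∑ j, (1 - |t i - t j|) * ((if j = F then (1:ℝ) else 0)
          - c * ((if j = F then (1:ℝ) else 0) + (if j = L then (1:ℝ) else 0)))
          = (1 - |t i - t F|) - c * ((1 - |t i - t F|) + (1 - |t i - t L|)) := by
        calc ∑ j, (1 - |t i - t j|) * ((if j = F then (1:ℝ) else 0)
              - c * ((if j = F then (1:ℝ) else 0) + (if j = L then (1:ℝ) else 0)))
            = ∑ j, ((1 - |t i - t j|) * (if j = F then (1:ℝ) else 0)
              - c * ((1 - |t i - t j|) * (if j = F then (1:ℝ) else 0)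
                + (1 - |t i - t j|) * (if j = L then (1:ℝ) else 0))) :=
              Finset.sum_congr rfl fun j _ => by ring
          _ = (∑ j, (1 - |t i - t j|) * (if j = F then (1:ℝ) else 0))
              - c * ((∑ j, (1 - |t i - t j|) * (if j = F then (1:ℝ) else 0))
                + (∑ j, (1 - |t i - t j|) * (if j = L then (1:ℝ) else 0))) := by
              rw [Finset.sum_sub_distrib, ← Finset.mul_sum, Finset.sum_add_distrib]
          _ = _ := by rw [hsum, hsum]
      rw [e1]
      have a1 : |t i - t F| = t i - t F := abs_of_nonneg (by linarith [htF i])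
      have a2 : |t i - t L| = t L - t i := by
        rw [abs_sub_comm]; exact abs_of_nonneg (by linarith [htL i])
      have a3 : |y - t i| = t i - y := by
        rw [abs_sub_comm]; exact abs_of_nonneg (by linarith [htF i])
      rw [a1, a2, a3]
      have : (1 - (t i - t F)) + (1 - (t L - t i)) = 2 - d := by simp only [hd]; ring
      rw [this, hcd]; ring
    · have hout : ∀ i ∈ Finset.univ, i ∉ ({F, L} : Finset (Fin m)) →
          |(if i = F then (1:ℝ) else 0)
            - c * ((if i = F then (1:ℝ) else 0) + (if i = L then (1:ℝ) else 0))| = 0 := by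
        intro i _ hi
        simp only [Finset.mem_insert, Finset.mem_singleton, not_or] at hi
        simp [hi.1, hi.2]
      rw [← Finset.sum_subset (Finset.subset_univ ({F, L} : Finset (Fin m))) hout]
      by_cases hFL : F = L
      · rw [hFL, Finset.insert_eq_self.2 (Finset.mem_singleton_self L), Finset.sum_singleton, if_pos rfl]
        rw [abs_le]; constructor <;> [linarith; linarith]
      · rw [Finset.sum_pair hFL, if_pos rfl, if_neg hFL, if_neg (Ne.symm hFL), if_pos rfl]
        have e1 : |1 - c * (1 + 0)| = 1 - c := by rw [abs_of_nonneg (by linarith)]; ring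
        have e2 : |(0:ℝ) - c * (0 + 1)| = c := by
          rw [show (0:ℝ) - c * (0+1) = -c by ring, abs_neg, abs_of_nonneg hc0]
        rw [e1, e2]; linarith
  · by_cases hyL : t L ≤ y
    · -- y right of all nodes
      set c : ℝ := (y - t L) / (2 - d) with hc
      have hc0 : 0 ≤ c := div_nonneg (by linarith) h2d.le
      have hc1 : c < 1 := (div_lt_one h2d).2 (by have := h0 L; linarith)
      have hcd : c * (2 - d) = y - t L := div_mul_cancel₀ _ (ne_of_gt h2d)
      refine ⟨fun j => (if j = L then (1:ℝ) else 0)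
          - c * ((if j = F then (1:ℝ) else 0) + (if j = L then (1:ℝ) else 0)), ?_, ?_⟩
      · intro i
        have e1 : ∑ j, (1 - |t i - t j|) * ((if j = L then (1:ℝ) else 0)
            - c * ((if j = F then (1:ℝ) else 0) + (if j = L then (1:ℝ) else 0)))
            = (1 - |t i - t L|) - c * ((1 - |t i - t F|) + (1 - |t i - t L|)) := by
          calc ∑ j, (1 - |t i - t j|) * ((if j = L then (1:ℝ) else 0)
                - c * ((if j = F then (1:ℝ) else 0) + (if j = L then (1:ℝ) else 0)))
              = ∑ j, ((1 - |t i - t j|) * (if j = L then (1:ℝ) else 0)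
                - c * ((1 - |t i - t j|) * (if j = F then (1:ℝ) else 0)
                  + (1 - |t i - t j|) * (if j = L then (1:ℝ) else 0))) :=
                Finset.sum_congr rfl fun j _ => by ring
            _ = (∑ j, (1 - |t i - t j|) * (if j = L then (1:ℝ) else 0))
                - c * ((∑ j, (1 - |t i - t j|) * (if j = F then (1:ℝ) else 0))
                  + (∑ j, (1 - |t i - t j|) * (if j = L then (1:ℝ) else 0))) := by
                rw [Finset.sum_sub_distrib, ← Finset.mul_sum, Finset.sum_add_distrib]
            _ = _ := by rw [hsum, hsum]
        rw [e1]
        have a1 : |t i - t F| = t i - t F := abs_of_nonneg (by linarith [htF i])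
        have a2 : |t i - t L| = t L - t i := by
          rw [abs_sub_comm]; exact abs_of_nonneg (by linarith [htL i])
        have a3 : |y - t i| = y - t i := abs_of_nonneg (by linarith [htL i])
        rw [a1, a2, a3]
        have : (1 - (t i - t F)) + (1 - (t L - t i)) = 2 - d := by simp only [hd]; ring
        rw [this, hcd]; ring
      · have hout : ∀ i ∈ Finset.univ, i ∉ ({F, L} : Finset (Fin m)) →
            |(if i = L then (1:ℝ) else 0)
              - c * ((if i = F then (1:ℝ) else 0) + (if i = L then (1:ℝ) else 0))| = 0 := by
          intro i _ hi
          simp only [Finset.mem_insert, Finset.mem_singleton, not_or] at hi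
          simp [hi.1, hi.2]
        rw [← Finset.sum_subset (Finset.subset_univ ({F, L} : Finset (Fin m))) hout]
        by_cases hFL : F = L
        · rw [hFL, Finset.insert_eq_self.2 (Finset.mem_singleton_self L), Finset.sum_singleton, if_pos rfl]
          rw [abs_le]; constructor <;> [linarith; linarith]
        · rw [Finset.sum_pair hFL, if_neg hFL, if_pos rfl, if_pos rfl, if_neg (Ne.symm hFL)]
          have e1 : |(0:ℝ) - c * (1 + 0)| = c := by
            rw [show (0:ℝ) - c * (1+0) = -c by ring, abs_neg, abs_of_nonneg hc0]
          have e2 : |1 - c * (0 + 1)| = 1 - c := by rw [abs_of_nonneg (by linarith)]; ring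
          rw [e1, e2]; linarith
    · -- y strictly between t F and t L
      push_neg at hyF hyL
      have hAne : (Finset.univ.filter (fun i => t i ≤ y)).Nonempty :=
        ⟨F, Finset.mem_filter.2 ⟨Finset.mem_univ _, hyF.le⟩⟩
      have hBne : (Finset.univ.filter (fun i => y < t i)).Nonempty :=
        ⟨L, Finset.mem_filter.2 ⟨Finset.mem_univ _, hyL⟩⟩
      set k : Fin m := (Finset.univ.filter (fun i => t i ≤ y)).max' hAne with hk
      set k' : Fin m := (Finset.univ.filter (fun i => y < t i)).min' hBne with hk'
      have htk : t k ≤ y := (Finset.mem_filter.1 (Finset.max'_mem _ hAne)).2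
      have htk' : y < t k' := (Finset.mem_filter.1 (Finset.min'_mem _ hBne)).2
      have hkk' : t k < t k' := lt_of_le_of_lt htk htk'
      have hh : (0:ℝ) < t k' - t k := sub_pos.2 hkk'
      have hcover : ∀ i, t i ≤ t k ∨ t k' ≤ t i := by
        intro i
        by_cases hi : t i ≤ y
        · left
          exact hm.monotone (Finset.le_max' _ i (Finset.mem_filter.2 ⟨Finset.mem_univ _, hi⟩))
        · right
          push_neg at hi
          exact hm.monotone (Finset.min'_le _ i (Finset.mem_filter.2 ⟨Finset.mem_univ _, hi⟩))
      set lam : ℝ := (t k' - y) / (t k' - t k) with hlam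
      have hl0 : 0 ≤ lam := div_nonneg (by linarith) hh.le
      have hl1 : lam ≤ 1 := (div_le_one hh).2 (by linarith)
      have hmul : lam * (t k' - t k) = t k' - y := div_mul_cancel₀ _ (ne_of_gt hh)
      have hknk' : k ≠ k' := fun h => by rw [h] at htk; linarith
      refine ⟨fun j => lam * (if j = k then (1:ℝ) else 0)
          + (1 - lam) * (if j = k' then (1:ℝ) else 0), ?_, ?_⟩
      · intro i
        have e1 : ∑ j, (1 - |t i - t j|) * (lam * (if j = k then (1:ℝ) else 0)
            + (1 - lam) * (if j = k' then (1:ℝ) else 0))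
            = lam * (1 - |t i - t k|) + (1 - lam) * (1 - |t i - t k'|) := by
          calc ∑ j, (1 - |t i - t j|) * (lam * (if j = k then (1:ℝ) else 0)
                + (1 - lam) * (if j = k' then (1:ℝ) else 0))
              = ∑ j, (lam * ((1 - |t i - t j|) * (if j = k then (1:ℝ) else 0))
                + (1 - lam) * ((1 - |t i - t j|) * (if j = k' then (1:ℝ) else 0))) :=
                Finset.sum_congr rfl fun j _ => by ring
            _ = lam * (∑ j, (1 - |t i - t j|) * (if j = k then (1:ℝ) else 0))
                + (1 - lam) * (∑ j, (1 - |t i - t j|) * (if j = k' then (1:ℝ) else 0)) := by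
                rw [Finset.sum_add_distrib, ← Finset.mul_sum, ← Finset.mul_sum]
            _ = _ := by rw [hsum, hsum]
        rw [e1]
        rcases hcover i with hi | hi
        · have a1 : |t i - t k| = t k - t i := by
            rw [abs_sub_comm]; exact abs_of_nonneg (by linarith)
          have a2 : |t i - t k'| = t k' - t i := by
            rw [abs_sub_comm]; exact abs_of_nonneg (by linarith)
          have a3 : |y - t i| = y - t i := abs_of_nonneg (by linarith)
          rw [a1, a2, a3]; nlinarith [hmul]
        · have a1 : |t i - t k| = t i - t k := abs_of_nonneg (by linarith)
          have a2 : |t i - t k'| = t i - t k' := abs_of_nonneg (by linarith)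
          have a3 : |y - t i| = t i - y := by
            rw [abs_sub_comm]; exact abs_of_nonneg (by linarith)
          rw [a1, a2, a3]; nlinarith [hmul]
      · have hout : ∀ i ∈ Finset.univ, i ∉ ({k, k'} : Finset (Fin m)) →
            |lam * (if i = k then (1:ℝ) else 0) + (1 - lam) * (if i = k' then (1:ℝ) else 0)| = 0 := by
          intro i _ hi
          simp only [Finset.mem_insert, Finset.mem_singleton, not_or] at hi
          simp [hi.1, hi.2]
        rw [← Finset.sum_subset (Finset.subset_univ ({k, k'} : Finset (Fin m))) hout]
        rw [Finset.sum_pair hknk', if_pos rfl, if_neg hknk', if_neg (Ne.symm hknk'), if_pos rfl]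
        have e1 : |lam * 1 + (1 - lam) * 0| = lam := by
          rw [show lam * 1 + (1-lam) * 0 = lam by ring, abs_of_nonneg hl0]
        have e2 : |lam * 0 + (1 - lam) * 1| = 1 - lam := by
          rw [show lam * 0 + (1-lam) * 1 = 1 - lam by ring, abs_of_nonneg (by linarith)]
        rw [e1, e2]; linarith


/-- the restricted Wendland kernel `K_w(x,y) = max{1 - |x-y|, 0}` on `(0,1)`
satisfies (A4′): for pairwise distinct `x₁,…,x_m ∈ (0,1)` the matrix `[K_w(x_i,x_j)]` is
invertible, and for every `x ∈ (0,1)` the unique solution `b` of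
`∑_j K_w(x_i,x_j)·b_j = K_w(x,x_i)` satisfies `∑_i |b_i| ≤ 1`. -/
theorem Kw_A4 (m : ℕ) (x : Fin m → ℝ) (hx : ∀ i, x i ∈ Set.Ioo (0 : ℝ) 1)
    (hinj : Function.Injective x) :
    IsUnit (Matrix.of fun i j : Fin m => max (1 - |x i - x j|) 0) ∧
      ∀ y ∈ Set.Ioo (0 : ℝ) 1, ∀ b : Fin m → ℝ,
        (∀ i, ∑ j, max (1 - |x i - x j|) 0 * b j = max (1 - |y - x i|) 0) →
        ∑ i, |b i| ≤ 1 := by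
  have habslt : ∀ a b : ℝ, a ∈ Set.Ioo (0:ℝ) 1 → b ∈ Set.Ioo (0:ℝ) 1 → |a - b| < 1 := by
    rintro a b ⟨ha0, ha1⟩ ⟨hb0, hb1⟩
    rw [abs_sub_lt_iff]; constructor <;> linarith
  have hmaxx : ∀ i j, max (1 - |x i - x j|) 0 = 1 - |x i - x j| := fun i j =>
    max_eq_left (by linarith [habslt _ _ (hx i) (hx j)])
  let σ : Equiv.Perm (Fin m) := Tuple.sort x
  have hmono : StrictMono (x ∘ σ) :=
    (Tuple.monotone_sort x).strictMono_of_injective (hinj.comp σ.injective)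
  have h0 : ∀ i, 0 < (x ∘ σ) i := fun i => (hx _).1
  have h1 : ∀ i, (x ∘ σ) i < 1 := fun i => (hx _).2
  have hker : ∀ c : Fin m → ℝ, (∀ i, ∑ j, (1 - |x i - x j|) * c j = 0) → c = 0 := by
    intro c hcx
    have hc0 : (c ∘ σ) = 0 := by
      apply Kw_ker_trivial (x ∘ σ) h0 h1 hmono
      intro i
      have hre : ∑ j, (1 - |x (σ i) - x (σ j)|) * c (σ j)
          = ∑ j, (1 - |x (σ i) - x j|) * c j :=
        Equiv.sum_comp σ (fun j => (1 - |x (σ i) - x j|) * c j)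
      simpa [Function.comp] using hre.trans (hcx (σ i))
    funext i
    have := congrFun hc0 (σ.symm i)
    simpa using this
  constructor
  · have hEq : (Matrix.of fun i j : Fin m => max (1 - |x i - x j|) 0)
        = Matrix.of fun i j : Fin m => 1 - |x i - x j| := by
      ext i j; exact hmaxx i j
    rw [hEq, ← Matrix.mulVec_injective_iff_isUnit]
    intro u v huv
    have hz : u - v = 0 := by
      apply hker
      intro i
      have h6 : (Matrix.of fun i j : Fin m => 1 - |x i - x j|).mulVec (u - v) = 0 := by
        rw [Matrix.mulVec_sub, huv, sub_self]
      have := congrFun h6 i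
      simpa [Matrix.mulVec, dotProduct] using this
    exact sub_eq_zero.1 hz
  · intro y hy b hb
    have hb' : ∀ i, ∑ j, (1 - |x i - x j|) * b j = 1 - |y - x i| := by
      intro i
      have h7 := hb i
      rw [max_eq_left (by linarith [habslt y (x i) hy (hx i)])] at h7
      rw [← h7]
      exact Finset.sum_congr rfl fun j _ => by rw [hmaxx i j]
    rcases Nat.eq_zero_or_pos m with hm0 | hm0
    · subst hm0; simp
    obtain ⟨b₀, hb₀eq, hb₀sum⟩ :=
      Kw_exists_sol hm0 (x ∘ σ) h0 h1 hmono y hy.1 hy.2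
    have hbs : ∀ i, ∑ j, (1 - |(x ∘ σ) i - (x ∘ σ) j|) * (b ∘ σ) j = 1 - |y - (x ∘ σ) i| := by
      intro i
      have hre : ∑ j, (1 - |x (σ i) - x (σ j)|) * b (σ j)
          = ∑ j, (1 - |x (σ i) - x j|) * b j :=
        Equiv.sum_comp σ (fun j => (1 - |x (σ i) - x j|) * b j)
      simpa [Function.comp] using hre.trans (hb' (σ i))
    have hdiff : (fun j => (b ∘ σ) j - b₀ j) = 0 := by
      apply Kw_ker_trivial (x ∘ σ) h0 h1 hmono
      intro i
      have h8 : ∑ j, ((1 - |(x ∘ σ) i - (x ∘ σ) j|) * (b ∘ σ) j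
          - (1 - |(x ∘ σ) i - (x ∘ σ) j|) * b₀ j) = 0 := by
        rw [Finset.sum_sub_distrib, hbs i, hb₀eq i, sub_self]
      rw [← h8]
      exact Finset.sum_congr rfl fun j _ => by ring
    have hbb : ∀ j, b (σ j) = b₀ j := by
      intro j
      have := congrFun hdiff j
      simpa [sub_eq_zero] using this
    calc ∑ i, |b i| = ∑ i, |b (σ i)| := (Equiv.sum_comp σ (fun i => |b i|)).symm
      _ = ∑ i, |b₀ i| := by simp [hbb]
      _ ≤ 1 := hb₀sum
end

section
/- Let X be a set, G : X×X → ℂ a kernel, 𝔸 : ℬ_p → ℬ_q an invertible bounded linear operator, and x_1,…,x_m ∈ X pairwise distinct points such that the matrix M = [G(x_i,x_j)]_{i,j=1}^m is invertible. Let α_m > 0 and suppose that for every x ∈ X the vector b(x) = M^{-1}·(G(x,x_i))_{i=1}^m ∈ ℂ^m satisfies ∑_{i=1}^m |b_i(x)| ≤ α_m. Then for every x ∈ X and every c ∈ ℬ_p, the unique d ∈ ℬ_p^m solving ∑_{j=1}^m G(x_i,x_j)·𝔸(d_j) = G(x,x_i)·𝔸(c) for all i ∈ {1,…,m} satisfies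 ∑_{i=1}^m ‖d_i‖_p ≤ α_m·‖c‖_p. -/
open scoped ENNReal NNReal

/-- `ℬ_p`: the space `ℂⁿ` equipped with the `ℓ^p` norm. -/
abbrev Bsp (p : ℝ≥0∞) (n : ℕ) : Type := PiLp p (fun _ : Fin n => ℂ)

/-- if at a point configuration `x₁,…,x_m` the scalar kernel `G` has Lebesgue
constant bounded by `α_m` (i.e. for every `x` the solution `b(x)` of
`∑_j G(x_i,x_j)·b_j = G(x,x_i)` satisfies `∑ |b_i(x)| ≤ α_m`), then for the multi-task
kernel `𝐆 = G·𝔸` the solution `d` of `∑_j G(x_i,x_j)·𝔸(d_j) = G(x,x_i)·𝔸(c)` satisfies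
`∑_i ‖d_i‖_p ≤ α_m·‖c‖_p`. -/
theorem lebesgue_constant_GA (p q : ℝ≥0∞) [Fact (1 ≤ p)] [Fact (1 ≤ q)]
    (hpq : p⁻¹ + q⁻¹ = 1) (n : ℕ) {X : Type*} (G : X → X → ℂ)
    (𝔸 : Bsp p n ≃L[ℂ] Bsp q n) (m : ℕ) (x : Fin m → X) (hinj : Function.Injective x)
    (hMinv : IsUnit (Matrix.of fun i j : Fin m => G (x i) (x j)))
    (α : ℝ) (hα : 0 < α)
    (hG : ∀ y : X, ∀ b : Fin m → ℂ,
      (∀ i, ∑ j, G (x i) (x j) * b j = G y (x i)) → ∑ i, ‖b i‖ ≤ α) :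
    ∀ y : X, ∀ c : Bsp p n, ∀ d : Fin m → Bsp p n,
      (∀ i, ∑ j, G (x i) (x j) • 𝔸 (d j) = G y (x i) • 𝔸 c) →
      ∑ i, ‖d i‖ ≤ α * ‖c‖ := by
  intro y c d hd
  set M : Matrix (Fin m) (Fin m) ℂ := Matrix.of fun i j => G (x i) (x j) with hM
  have hdet : IsUnit M.det := (Matrix.isUnit_iff_isUnit_det M).mp hMinv
  set w : Fin m → ℂ := fun i => G y (x i) with hw
  set b : Fin m → ℂ := M⁻¹.mulVec w with hb
  have hMb : M.mulVec b = w := by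
    rw [hb, Matrix.mulVec_mulVec, Matrix.mul_nonsing_inv _ hdet, Matrix.one_mulVec]
  have hbeq : ∀ i, ∑ j, G (x i) (x j) * b j = G y (x i) := by
    intro i
    have := congrFun hMb i
    simpa [Matrix.mulVec, dotProduct, hM, hw] using this
  have hsum : ∑ i, ‖b i‖ ≤ α := hG y b hbeq
  have hd' : ∀ i, ∑ j, G (x i) (x j) • d j = G y (x i) • c := by
    intro i
    have h := congrArg 𝔸.symm (hd i)
    simpa [map_sum, map_smul] using h
  have hdb : ∀ j, d j = b j • c := by
    have hvec : ∀ k, (fun j => d j k) = fun j => b j * c k := by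
      intro k
      have h1 : M.mulVec (fun j => d j k) = fun i => G y (x i) * c k := by
        funext i
        have := congrArg (PiLp.projₗ (𝕜 := ℂ) (β := fun _ : Fin n => ℂ) p k) (hd' i)
        simpa [Matrix.mulVec, dotProduct, hM, map_sum, map_smul,
          PiLp.smul_apply, smul_eq_mul] using this
      have h2 : M.mulVec (fun j => b j * c k) = fun i => G y (x i) * c k := by
        have : (fun j => b j * c k) = c k • b := by
          funext j; simp [mul_comm]
        rw [this, Matrix.mulVec_smul, hMb]
        funext i; simp [hw, mul_comm]
      have hinjv : Function.Injective M.mulVec :=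
        Matrix.mulVec_injective_iff_isUnit.2 hMinv
      exact hinjv (h1.trans h2.symm)
    intro j
    ext k
    have := congrFun (hvec k) j
    simpa [PiLp.smul_apply, smul_eq_mul] using this
  calc ∑ i, ‖d i‖ = ∑ i, ‖b i‖ * ‖c‖ := by
        refine Finset.sum_congr rfl fun i _ => ?_
        rw [hdb i, norm_smul]
      _ = (∑ i, ‖b i‖) * ‖c‖ := by rw [Finset.sum_mul]
      _ ≤ α * ‖c‖ := mul_le_mul_of_nonneg_right hsum (norm_nonneg c)
end
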